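/- Let G = (L ⊔ R, E) be an (r, Δ, c)-boundary expander, J ⊆ R with |Ext_G(J)| ≤ cr/4, and G' = G \ Ext_G(J). Then for every J' ⊆ R \ Ext_G(J) with |Ext_G(J ∪ J')| ≤ cr/4, one has Cl_G(J ∪ J') = Cl_G(J) ∪ Cl_{G'}(J'), and consequently G' \ Ext_{G'}(J') = G \ Ext_G(J ∪ J'). -/
import Mathlib


open Finset

variable {L R : Type*} [Fintype L] [Fintype R] [DecidableEq L] [DecidableEq R]

/-- The set of neighbours of `I ⊆ L` in the bipartite graph with adjacency `A`. -/
def nbhd (A : L → R → Prop) [∀ a b, Decidable (A a b)] (I : Finset L) : Finset R :=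
  Finset.univ.filter (fun b => ∃ a ∈ I, A a b)

/-- The boundary of `I ⊆ L`: vertices of `R` adjacent to exactly one vertex of `I`. -/
def bdry (A : L → R → Prop) [∀ a b, Decidable (A a b)] (I : Finset L) : Finset R :=
  Finset.univ.filter (fun b => (I.filter (fun a => A a b)).card = 1)

/-- Degree of a left vertex. -/
def ldeg (A : L → R → Prop) [∀ a b, Decidable (A a b)] (a : L) : ℕ :=
  (Finset.univ.filter (fun b => A a b)).card

/-- `(r, Δ, c)`-boundary expander. -/
def IsBoundaryExpander (A : L → R → Prop) [∀ a b, Decidable (A a b)] (r Δ : ℕ) (c : ℝ) : Prop :=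
  (∀ a : L, ldeg A a ≤ Δ) ∧
  ∀ I : Finset L, I.card ≤ r → c * I.card ≤ ((bdry A I).card : ℝ)

/-- `I` is `(r, J)`-contained: `|I| ≤ r` and `∂(I) ⊆ J`. -/
def IsContained (A : L → R → Prop) [∀ a b, Decidable (A a b)] (r : ℕ) (J : Finset R) (I : Finset L) : Prop :=
  I.card ≤ r ∧ bdry A I ⊆ J

/-- `I` is a closure of `J`: an `(r, J)`-contained set of maximal size. -/
def IsClosure (A : L → R → Prop) [∀ a b, Decidable (A a b)] (r : ℕ) (J : Finset R) (I : Finset L) : Prop :=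
  IsContained A r J I ∧ ∀ I' : Finset L, IsContained A r J I' → I'.card ≤ I.card

/-- `(r, Δ, c)`-weak (boundary) expander. -/
def IsWeakExpander (A : L → R → Prop) [∀ a b, Decidable (A a b)] (r Δ : ℕ) (c : ℝ) : Prop :=
  (∀ a : L, ldeg A a ≤ Δ) ∧
  (∀ I : Finset L, I.Nonempty → (I.card : ℝ) ≤ r / 2 → (bdry A I).Nonempty) ∧
  (∀ I : Finset L, (r : ℝ) / 2 < I.card → I.card ≤ r → c * I.card ≤ ((bdry A I).card : ℝ))

/-- `I` is `(r, J)`-contained in the subgraph of `G` with adjacency `A'` and left part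
`Lset`. -/
def IsContainedIn (A' : L → R → Prop) [∀ a b, Decidable (A' a b)]
    (Lset : Finset L) (r : ℕ) (J : Finset R) (I : Finset L) : Prop :=
  I ⊆ Lset ∧ I.card ≤ r ∧ bdry A' I ⊆ J

/-- `I` is a closure of `J` in the subgraph: a maximal-size contained set. -/
def IsClosureIn (A' : L → R → Prop) [∀ a b, Decidable (A' a b)]
    (Lset : Finset L) (r : ℕ) (J : Finset R) (I : Finset L) : Prop :=
  IsContainedIn A' Lset r J I ∧
  ∀ I' : Finset L, IsContainedIn A' Lset r J I' → I'.card ≤ I.card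

lemma mem_nbhd' (A : L → R → Prop) [∀ a b, Decidable (A a b)] {I : Finset L} {b : R} :
    b ∈ nbhd A I ↔ ∃ a ∈ I, A a b := by simp [nbhd]

lemma mem_bdry' (A : L → R → Prop) [∀ a b, Decidable (A a b)] {I : Finset L} {b : R} :
    b ∈ bdry A I ↔ (I.filter (fun a => A a b)).card = 1 := by simp [bdry]

lemma bdry_union_subset' (A : L → R → Prop) [∀ a b, Decidable (A a b)] (I₁ I₂ : Finset L) :
    bdry A (I₁ ∪ I₂) ⊆ bdry A I₁ ∪ bdry A I₂ := by
  intro b hb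
  rw [mem_bdry', filter_union] at hb
  obtain ⟨a, ha⟩ := card_eq_one.mp hb
  have haa : a ∈ I₁.filter (fun a => A a b) ∪ I₂.filter (fun a => A a b) := by
    rw [ha]; exact mem_singleton_self a
  rcases mem_union.mp haa with h | h
  · refine mem_union_left _ ?_
    rw [mem_bdry']
    have hsub : I₁.filter (fun a => A a b) ⊆ {a} := by
      rw [← ha]; exact subset_union_left
    have heq : I₁.filter (fun a => A a b) = {a} :=
      Finset.Subset.antisymm hsub (singleton_subset_iff.mpr h)
    rw [heq, card_singleton]
  · refine mem_union_right _ ?_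
    rw [mem_bdry']
    have hsub : I₂.filter (fun a => A a b) ⊆ {a} := by
      rw [← ha]; exact subset_union_right
    have heq : I₂.filter (fun a => A a b) = {a} :=
      Finset.Subset.antisymm hsub (singleton_subset_iff.mpr h)
    rw [heq, card_singleton]

lemma subset_closure' (A : L → R → Prop) [∀ a b, Decidable (A a b)] {r : ℕ} {J : Finset R}
    {Icl : Finset L} (h : IsClosure A r J Icl) {I : Finset L}
    (hb : bdry A I ⊆ J) (h3 : (I ∪ Icl).card ≤ r) : I ⊆ Icl := by
  have hcont : IsContained A r J (I ∪ Icl) := by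
    refine ⟨h3, fun b hbb => ?_⟩
    rcases mem_union.mp (bdry_union_subset' A I Icl hbb) with hh | hh
    · exact hb hh
    · exact h.1.2 hh
  have hle := h.2 _ hcont
  have heq := Finset.eq_of_subset_of_card_le subset_union_right hle
  intro a ha
  rw [heq]
  exact mem_union_left _ ha

lemma subset_closureIn' (A' : L → R → Prop) [∀ a b, Decidable (A' a b)] {Lset : Finset L}
    {r : ℕ} {J : Finset R} {Icl : Finset L} (h : IsClosureIn A' Lset r J Icl) {I : Finset L}
    (hL : I ⊆ Lset) (hb : bdry A' I ⊆ J) (h3 : (I ∪ Icl).card ≤ r) : I ⊆ Icl := by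
  have hcont : IsContainedIn A' Lset r J (I ∪ Icl) := by
    refine ⟨union_subset hL h.1.1, h3, fun b hbb => ?_⟩
    rcases mem_union.mp (bdry_union_subset' A' I Icl hbb) with hh | hh
    · exact hb hh
    · exact h.1.2.2 hh
  have hle := h.2 _ hcont
  have heq := Finset.eq_of_subset_of_card_le subset_union_right hle
  intro a ha
  rw [heq]
  exact mem_union_left _ ha

/-- For an `(r, Δ, c)`-boundary expander `G`, with `|Ext_G(J)| ≤ cr/4`,
`G' = G \ Ext_G(J)`, and `J' ⊆ R \ Ext_G(J)` with `|Ext_G(J ∪ J')| ≤ cr/4`, we have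
`Cl_G(J ∪ J') = Cl_G(J) ∪ Cl_{G'}(J')` and `Ext_G(J) ∪ Ext_{G'}(J') = Ext_G(J ∪ J')`
(hence `G' \ Ext_{G'}(J') = G \ Ext_G(J ∪ J')`). -/
theorem closure_step_by_step (A : L → R → Prop) [∀ a b, Decidable (A a b)]
    (r Δ : ℕ) (c : ℝ) (hc : 0 < c)
    (hexp : IsBoundaryExpander A r Δ c)
    (J : Finset R) (IclJ : Finset L) (hIclJ : IsClosure A r J IclJ)
    (ext : Finset R) (hextdef : ext = J ∪ nbhd A IclJ)
    (hext : (ext.card : ℝ) ≤ c * r / 4)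
    -- the subgraph `G' = G \ Ext_G(J)`
    (A' : L → R → Prop) [∀ a b, Decidable (A' a b)]
    (hA' : ∀ a b, A' a b ↔ A a b ∧ b ∉ ext)
    (Lset : Finset L) (hLset : ∀ a, a ∈ Lset ↔ ∃ b, A a b ∧ b ∉ ext)
    (J' : Finset R) (hJ' : ∀ b ∈ J', b ∉ ext)
    (Icl' : Finset L) (hIcl' : IsClosureIn A' Lset r J' Icl')
    (IclAll : Finset L) (hIclAll : IsClosure A r (J ∪ J') IclAll)
    (hextAll : (((J ∪ J') ∪ nbhd A IclAll).card : ℝ) ≤ c * r / 4) :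
    IclAll = IclJ ∪ Icl' ∧
    ext ∪ (J' ∪ nbhd A' Icl') = (J ∪ J') ∪ nbhd A IclAll := by
  obtain ⟨hΔ, hexp2⟩ := hexp
  -- basic cardinality facts (over ℝ)
  have hJsub : J ⊆ ext := by rw [hextdef]; exact subset_union_left
  have hnbhdJsub : nbhd A IclJ ⊆ ext := by rw [hextdef]; exact subset_union_right
  have hJle : (J.card : ℝ) ≤ c * r / 4 :=
    le_trans (by exact_mod_cast Finset.card_le_card hJsub) hext
  have hJJ'le : ((J ∪ J').card : ℝ) ≤ c * r / 4 :=
    le_trans (by exact_mod_cast Finset.card_le_card (subset_union_left (s₂ := nbhd A IclAll))) hextAll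
  have hJ'le : (J'.card : ℝ) ≤ c * r / 4 :=
    le_trans (by exact_mod_cast Finset.card_le_card (subset_union_right (s₁ := J))) hJJ'le
  -- |IclJ| ≤ r/4
  have hIclJcard : (IclJ.card : ℝ) ≤ (r : ℝ) / 4 := by
    have h1 := hexp2 IclJ hIclJ.1.1
    have h2 : ((bdry A IclJ).card : ℝ) ≤ (J.card : ℝ) := by
      exact_mod_cast Finset.card_le_card hIclJ.1.2
    have h3 : c * (IclJ.card : ℝ) ≤ c * ((r : ℝ) / 4) := by
      calc c * (IclJ.card : ℝ) ≤ (J.card : ℝ) := le_trans h1 h2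
        _ ≤ c * r / 4 := hJle
        _ = c * ((r : ℝ) / 4) := by ring
    exact le_of_mul_le_mul_left h3 hc
  -- |IclAll| ≤ r/4
  have hIclAllcard : (IclAll.card : ℝ) ≤ (r : ℝ) / 4 := by
    have h1 := hexp2 IclAll hIclAll.1.1
    have h2 : ((bdry A IclAll).card : ℝ) ≤ ((J ∪ J').card : ℝ) := by
      exact_mod_cast Finset.card_le_card hIclAll.1.2
    have h3 : c * (IclAll.card : ℝ) ≤ c * ((r : ℝ) / 4) := by
      calc c * (IclAll.card : ℝ) ≤ ((J ∪ J').card : ℝ) := le_trans h1 h2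
        _ ≤ c * r / 4 := hJJ'le
        _ = c * ((r : ℝ) / 4) := by ring
    exact le_of_mul_le_mul_left h3 hc
  -- boundaries in G vs G'
  have hbdrysub : ∀ I : Finset L, bdry A I ⊆ bdry A' I ∪ ext := by
    intro I b hb
    by_cases hbe : b ∈ ext
    · exact mem_union_right _ hbe
    · refine mem_union_left _ ?_
      rw [mem_bdry'] at hb ⊢
      have : I.filter (fun a => A' a b) = I.filter (fun a => A a b) := by
        apply filter_congr
        intro a _
        simp only [hA' a b, hbe, and_true, not_false_iff]
      rw [this]; exact hb
  -- |Icl'| ≤ r/2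
  have hIcl'card : (Icl'.card : ℝ) ≤ (r : ℝ) / 2 := by
    have h1 := hexp2 Icl' hIcl'.1.2.1
    have h2 : ((bdry A Icl').card : ℝ) ≤ ((bdry A' Icl').card : ℝ) + (ext.card : ℝ) := by
      have := Finset.card_le_card (hbdrysub Icl')
      have h4 := Finset.card_union_le (bdry A' Icl') ext
      exact_mod_cast le_trans this h4
    have h5 : ((bdry A' Icl').card : ℝ) ≤ (J'.card : ℝ) := by
      exact_mod_cast Finset.card_le_card hIcl'.1.2.2
    have h3 : c * (Icl'.card : ℝ) ≤ c * ((r : ℝ) / 2) := by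
      calc c * (Icl'.card : ℝ) ≤ ((bdry A Icl').card : ℝ) := h1
        _ ≤ ((bdry A' Icl').card : ℝ) + (ext.card : ℝ) := h2
        _ ≤ c * r / 4 + c * r / 4 := add_le_add (le_trans h5 hJ'le) hext
        _ = c * ((r : ℝ) / 2) := by ring
    exact le_of_mul_le_mul_left h3 hc
  have hr0 : (0 : ℝ) ≤ (r : ℝ) := Nat.cast_nonneg r
  -- Step 1: IclJ ⊆ IclAll
  have hIclJsub : IclJ ⊆ IclAll := by
    apply subset_closure' A hIclAll
    · exact fun b hb => mem_union_left _ (hIclJ.1.2 hb)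
    · have : ((IclJ ∪ IclAll).card : ℝ) ≤ (r : ℝ) := by
        calc ((IclJ ∪ IclAll).card : ℝ) ≤ (IclJ.card : ℝ) + (IclAll.card : ℝ) := by
              exact_mod_cast Finset.card_union_le IclJ IclAll
          _ ≤ (r : ℝ) / 4 + (r : ℝ) / 4 := add_le_add hIclJcard hIclAllcard
          _ ≤ (r : ℝ) := by linarith
      exact_mod_cast this
  -- Step 2: elements of IclAll outside Lset are in IclJ
  have hnotLset : ∀ a ∈ IclAll, a ∉ Lset → a ∈ IclJ := by
    intro a haAll haL
    have hnb : ∀ b, A a b → b ∈ ext := by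
      intro b hab
      by_contra hbe
      exact haL ((hLset a).mpr ⟨b, hab, hbe⟩)
    have hsubb : bdry A ({a} ∪ IclJ) ⊆ J := by
      intro b hb
      rw [mem_bdry', filter_union] at hb
      by_cases hne : (IclJ.filter (fun a => A a b)).Nonempty
      · -- the unique neighbour lies in IclJ
        have hsub1 : IclJ.filter (fun a => A a b) ⊆
            ({a} : Finset L).filter (fun a => A a b) ∪ IclJ.filter (fun a => A a b) :=
          subset_union_right
        have hle1 : (IclJ.filter (fun a => A a b)).card ≤ 1 := by
          rw [← hb]; exact Finset.card_le_card hsub1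
        have hge1 : 1 ≤ (IclJ.filter (fun a => A a b)).card := Finset.card_pos.mpr hne
        have : b ∈ bdry A IclJ := by rw [mem_bdry']; omega
        exact hIclJ.1.2 this
      · -- the unique neighbour is a itself
        rw [Finset.not_nonempty_iff_eq_empty] at hne
        rw [hne, union_empty] at hb
        have hab : A a b := by
          have : a ∈ ({a} : Finset L).filter (fun a => A a b) := by
            obtain ⟨x, hx⟩ := card_eq_one.mp hb
            have : x ∈ ({a} : Finset L).filter (fun a => A a b) := by
              rw [hx]; exact mem_singleton_self x
            have hxa : x = a := by
              have := mem_filter.mp this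
              exact mem_singleton.mp this.1
            rwa [hxa] at this
          exact (mem_filter.mp this).2
        have hbext := hnb b hab
        rw [hextdef] at hbext
        rcases mem_union.mp hbext with h | h
        · exact h
        · exfalso
          obtain ⟨a', ha', haa'⟩ := (mem_nbhd' A).mp h
          have : a' ∈ IclJ.filter (fun a => A a b) := mem_filter.mpr ⟨ha', haa'⟩
          rw [hne] at this
          exact absurd this (notMem_empty a')
    have hcard : ({a} ∪ IclJ : Finset L) ∪ IclJ ⊆ IclAll ∪ IclJ := by
      apply union_subset_union _ (subset_refl _)
      apply union_subset
      · exact singleton_subset_iff.mpr haAll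
      · exact hIclJsub
    have hcard2 : (({a} ∪ IclJ : Finset L) ∪ IclJ).card ≤ r := by
      have h1 : ((IclAll ∪ IclJ).card : ℝ) ≤ (r : ℝ) := by
        calc ((IclAll ∪ IclJ).card : ℝ) ≤ (IclAll.card : ℝ) + (IclJ.card : ℝ) := by
              exact_mod_cast Finset.card_union_le IclAll IclJ
          _ ≤ (r : ℝ) / 4 + (r : ℝ) / 4 := add_le_add hIclAllcard hIclJcard
          _ ≤ (r : ℝ) := by linarith
      have h1' : (IclAll ∪ IclJ).card ≤ r := by exact_mod_cast h1
      exact le_trans (Finset.card_le_card hcard) h1'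
    have := subset_closure' A hIclJ hsubb hcard2
    exact this (mem_union_left _ (mem_singleton_self a))
  -- K := IclAll \ IclJ
  set K := IclAll \ IclJ with hK
  have hKLset : K ⊆ Lset := by
    intro a ha
    have h1 := mem_sdiff.mp ha
    by_contra hL
    exact h1.2 (hnotLset a h1.1 hL)
  have hKAll : IclJ ∪ K = IclAll := Finset.union_sdiff_of_subset hIclJsub
  -- Step 4: bdry A' K ⊆ J'
  have hbdryK : bdry A' K ⊆ J' := by
    intro b hb
    rw [mem_bdry'] at hb
    -- b ∉ ext
    have hbe : b ∉ ext := by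
      obtain ⟨x, hx⟩ := card_eq_one.mp hb
      have hxmem : x ∈ K.filter (fun a => A' a b) := by rw [hx]; exact mem_singleton_self x
      have := (hA' x b).mp (mem_filter.mp hxmem).2
      exact this.2
    -- no A-neighbours of b in IclJ
    have hJempty : IclJ.filter (fun a => A a b) = ∅ := by
      rw [Finset.filter_eq_empty_iff]
      intro a ha hab
      exact hbe (hnbhdJsub ((mem_nbhd' A).mpr ⟨a, ha, hab⟩))
    have hKfilter : K.filter (fun a => A a b) = K.filter (fun a => A' a b) := by
      apply filter_congr
      intro a _
      simp only [hA' a b, hbe, and_true, not_false_iff]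
    have hfilterAll : IclAll.filter (fun a => A a b) = K.filter (fun a => A' a b) := by
      rw [← hKAll, filter_union, hJempty, empty_union, hKfilter]
    have hbAll : b ∈ bdry A IclAll := by
      rw [mem_bdry', hfilterAll]; exact hb
    have := hIclAll.1.2 hbAll
    rcases mem_union.mp this with h | h
    · exact absurd (hJsub h) hbe
    · exact h
  -- Step 5: K ⊆ Icl'
  have hKcard : (K.card : ℝ) ≤ (r : ℝ) / 4 :=
    le_trans (by exact_mod_cast Finset.card_le_card (Finset.sdiff_subset (s := IclAll))) hIclAllcard
  have hKIcl' : K ⊆ Icl' := by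
    apply subset_closureIn' A' hIcl' hKLset hbdryK
    have : ((K ∪ Icl').card : ℝ) ≤ (r : ℝ) := by
      calc ((K ∪ Icl').card : ℝ) ≤ (K.card : ℝ) + (Icl'.card : ℝ) := by
            exact_mod_cast Finset.card_union_le K Icl'
        _ ≤ (r : ℝ) / 4 + (r : ℝ) / 2 := add_le_add hKcard hIcl'card
        _ ≤ (r : ℝ) := by linarith
    exact_mod_cast this
  -- Step 6: IclJ ∪ Icl' ⊆ IclAll
  have hbdryUnion : bdry A (IclJ ∪ Icl') ⊆ J ∪ J' := by
    intro b hb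
    rw [mem_bdry', filter_union] at hb
    by_cases hne : (IclJ.filter (fun a => A a b)).Nonempty
    · have hsub1 : IclJ.filter (fun a => A a b) ⊆
          IclJ.filter (fun a => A a b) ∪ Icl'.filter (fun a => A a b) := subset_union_left
      have hle1 : (IclJ.filter (fun a => A a b)).card ≤ 1 := by
        rw [← hb]; exact Finset.card_le_card hsub1
      have hge1 : 1 ≤ (IclJ.filter (fun a => A a b)).card := Finset.card_pos.mpr hne
      have : b ∈ bdry A IclJ := by rw [mem_bdry']; omega
      exact mem_union_left _ (hIclJ.1.2 this)
    · rw [Finset.not_nonempty_iff_eq_empty] at hne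
      rw [hne, empty_union] at hb
      have hbnotN : b ∉ nbhd A IclJ := by
        intro hmem
        obtain ⟨a', ha', haa'⟩ := (mem_nbhd' A).mp hmem
        have : a' ∈ IclJ.filter (fun a => A a b) := mem_filter.mpr ⟨ha', haa'⟩
        rw [hne] at this
        exact absurd this (notMem_empty a')
      by_cases hbe : b ∈ ext
      · rw [hextdef] at hbe
        rcases mem_union.mp hbe with h | h
        · exact mem_union_left _ h
        · exact absurd h hbnotN
      · have hfeq : Icl'.filter (fun a => A a b) = Icl'.filter (fun a => A' a b) := by
          apply filter_congr
          intro a _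
          simp only [hA' a b, hbe, and_true, not_false_iff]
        have : b ∈ bdry A' Icl' := by rw [mem_bdry', ← hfeq]; exact hb
        exact mem_union_right _ (hIcl'.1.2.2 this)
  have hsub2 : IclJ ∪ Icl' ⊆ IclAll := by
    apply subset_closure' A hIclAll hbdryUnion
    have : (((IclJ ∪ Icl') ∪ IclAll).card : ℝ) ≤ (r : ℝ) := by
      calc (((IclJ ∪ Icl') ∪ IclAll).card : ℝ)
          ≤ ((IclJ ∪ Icl').card : ℝ) + (IclAll.card : ℝ) := by
            exact_mod_cast Finset.card_union_le (IclJ ∪ Icl') IclAll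
        _ ≤ (IclJ.card : ℝ) + (Icl'.card : ℝ) + (IclAll.card : ℝ) := by
            have : ((IclJ ∪ Icl').card : ℝ) ≤ (IclJ.card : ℝ) + (Icl'.card : ℝ) := by
              exact_mod_cast Finset.card_union_le IclJ Icl'
            linarith
        _ ≤ (r : ℝ) / 4 + (r : ℝ) / 2 + (r : ℝ) / 4 :=
            add_le_add (add_le_add hIclJcard hIcl'card) hIclAllcard
        _ ≤ (r : ℝ) := by linarith
    exact_mod_cast this
  -- Conclusion of part 1
  have hmain : IclAll = IclJ ∪ Icl' := by
    apply Finset.Subset.antisymm _ hsub2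
    intro a ha
    by_cases haJ : a ∈ IclJ
    · exact mem_union_left _ haJ
    · exact mem_union_right _ (hKIcl' (mem_sdiff.mpr ⟨ha, haJ⟩))
  refine ⟨hmain, ?_⟩
  -- Part 2: the ext equality
  apply Finset.Subset.antisymm
  · intro b hb
    rcases mem_union.mp hb with h | h
    · rw [hextdef] at h
      rcases mem_union.mp h with h1 | h1
      · exact mem_union_left _ (mem_union_left _ h1)
      · refine mem_union_right _ ?_
        obtain ⟨a, ha, hab⟩ := (mem_nbhd' A).mp h1
        refine (mem_nbhd' A).mpr ⟨a, ?_, hab⟩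
        exact hIclJsub ha
    · rcases mem_union.mp h with h1 | h1
      · exact mem_union_left _ (mem_union_right _ h1)
      · refine mem_union_right _ ?_
        obtain ⟨a, ha, hab⟩ := (mem_nbhd' A').mp h1
        refine (mem_nbhd' A).mpr ⟨a, ?_, ((hA' a b).mp hab).1⟩
        rw [hmain]
        exact mem_union_right _ ha
  · intro b hb
    rcases mem_union.mp hb with h | h
    · rcases mem_union.mp h with h1 | h1
      · exact mem_union_left _ (hJsub h1)
      · exact mem_union_right _ (mem_union_left _ h1)
    · obtain ⟨a, ha, hab⟩ := (mem_nbhd' A).mp h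
      rw [hmain] at ha
      rcases mem_union.mp ha with h1 | h1
      · exact mem_union_left _ (hnbhdJsub ((mem_nbhd' A).mpr ⟨a, h1, hab⟩))
      · by_cases hbe : b ∈ ext
        · exact mem_union_left _ hbe
        · refine mem_union_right _ (mem_union_right _ ?_)
          exact (mem_nbhd' A').mpr ⟨a, h1, (hA' a b).mpr ⟨hab, hbe⟩⟩
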